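/- arXiv:1310.5455 — 6 statements merged into one kernel-verified Lean document; each statement's English description precedes it below -/
import Mathlib

section
/- For all trace-zero 3×3 matrices x, y over F, the product x*y = ω·xy − ω²·yx − ((ω−ω²)/3)·tr(xy)·1 satisfies (x*y)*x = n(x)•y and x*(y*x) = n(x)•y, where n(x) is the coefficient of T in the characteristic polynomial det(T·1 − x). -/
variable {F : Type} [Field F]

/-- The Okubo product on `3×3` matrices (restricted to trace-zero matrices):
`x * y = ω • (xy) - ω² • (yx) - ((ω - ω²)/3) tr(xy) • 1`. -/
def okm (ω : F) (x y : Matrix (Fin 3) (Fin 3) F) : Matrix (Fin 3) (Fin 3) F :=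
  ω • (x * y) - ω ^ 2 • (y * x) -
    (((ω - ω ^ 2) / 3) * (x * y).trace) • (1 : Matrix (Fin 3) (Fin 3) F)

/-- The quadratic form `n(x)`: the coefficient of `T` in the characteristic polynomial
`det (T•1 - x) = T³ - tr(x)T² + n(x)T - det(x)`. -/
noncomputable def nq (x : Matrix (Fin 3) (Fin 3) F) : F := x.charpoly.coeff 1

lemma nq_entries (x : Matrix (Fin 3) (Fin 3) F) :
    nq x = x 0 0 * x 1 1 - x 0 1 * x 1 0 + (x 0 0 * x 2 2 - x 0 2 * x 2 0)
      + (x 1 1 * x 2 2 - x 1 2 * x 2 1) := by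
  rw [nq, Matrix.charpoly, Matrix.det_fin_three]
  simp [Matrix.charmatrix_apply, Matrix.one_apply]
  ring_nf
  simp [Polynomial.coeff_one, Polynomial.coeff_C]
  ring

set_option maxHeartbeats 4000000 in
/-- For trace-zero `3×3` matrices `x, y` over a field containing a
primitive cube root of unity `ω`, the Okubo product satisfies
`(x*y)*x = n(x) • y = x*(y*x)`. -/
theorem okubo_matrix_composition_identity (ω : F) (hω : ω ^ 2 + ω + 1 = 0) (hω1 : ω ≠ 1)
    (x y : Matrix (Fin 3) (Fin 3) F) (hx : x.trace = 0) (hy : y.trace = 0) :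
    okm ω (okm ω x y) x = nq x • y ∧ okm ω x (okm ω y x) = nq x • y := by
  have h3 : (3 : F) ≠ 0 := by
    intro h3
    have h2 : (2 * ω + 1) ^ 2 = 0 := by linear_combination 4 * hω - h3
    have h2' : 2 * ω + 1 = 0 := by
      exact (pow_eq_zero_iff two_ne_zero).mp h2
    exact hω1 (by linear_combination (-1 : F) * h2' + ω * h3)
  have hω2 : ω ^ 2 = -ω - 1 := by linear_combination hω
  have hω3 : ω ^ 3 = 1 := by linear_combination (ω - 1) * hω
  have hω4 : ω ^ 4 = ω := by linear_combination (ω ^ 2 - ω) * hω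
  have hω5 : ω ^ 5 = -ω - 1 := by linear_combination (ω ^ 3 - ω ^ 2 + 1) * hω
  have hω6 : ω ^ 6 = 1 := by linear_combination (ω ^ 4 - ω ^ 3 + ω - 1) * hω
  simp only [Matrix.trace_fin_three] at hx hy
  have hx2 : x 2 2 = -x 0 0 - x 1 1 := by linear_combination hx
  have hy2 : y 2 2 = -y 0 0 - y 1 1 := by linear_combination hy
  rw [nq_entries]
  constructor <;>
  · ext i j
    fin_cases i <;> fin_cases j <;>
    · simp [okm, Matrix.mul_apply, Matrix.trace_fin_three, Fin.sum_univ_three,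
        Matrix.one_apply]
      simp only [hx2, hy2]
      field_simp
      ring_nf
      simp only [hω2, hω3, hω4, hω5, hω6]
      ring
end

section
/- Let V be a finite-dimensional vector space over a field F equipped with an F-bilinear multiplication m : V → V → V and a quadratic form q : V → F whose polar form b(x,y) = q(x+y) − q(x) − q(y) is nondegenerate. Then the following are equivalent: (1) q(m x y) = q(x)·q(y) for all x, y ∈ V and b(m x y, z) = b(x, m y z) for all x, y, z ∈ V; (2) m (m x y) x = q(x) • y and m x (m y x) = q(x) • y for all x, y ∈ V. -/
open QuadraticMap

/-- Let `V` be a finite-dimensional vector space over a field `F` with a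
bilinear multiplication `m` and a quadratic form `q` whose polar form `b` is
nondegenerate.  Then `q` is multiplicative and `b` is associative with respect to `m` if
and only if `m (m x y) x = q(x) • y = m x (m y x)` for all `x, y`. -/
theorem symmetric_composition_iff (F V : Type) [Field F] [AddCommGroup V] [Module F V]
    [FiniteDimensional F V]
    (m : V →ₗ[F] V →ₗ[F] V) (q : QuadraticForm F V)
    (hb : ∀ v : V, (∀ w : V, QuadraticMap.polar q v w = 0) → v = 0) :
    ((∀ x y : V, q (m x y) = q x * q y) ∧
      (∀ x y z : V, QuadraticMap.polar q (m x y) z = QuadraticMap.polar q x (m y z))) ↔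
    (∀ x y : V, m (m x y) x = q x • y ∧ m x (m y x) = q x • y) := by
  -- separation lemma from nondegeneracy
  have hsep : ∀ u v : V, (∀ w : V, polar q u w = polar q v w) → u = v := by
    intro u v h
    have h0 : u - v = 0 := hb (u - v) (fun w => by rw [polar_sub_left, h, sub_self])
    exact sub_eq_zero.mp h0
  constructor
  · rintro ⟨hq, hassoc⟩
    -- linearizations of multiplicativity
    have hP1 : ∀ x z y : V, polar q (m x y) (m z y) = polar q x z * q y := by
      intro x z y
      have h := hq (x + z) y
      rw [QuadraticMap.map_add q x z] at h
      simp only [map_add, LinearMap.add_apply] at h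
      rw [QuadraticMap.map_add q (m x y) (m z y), hq, hq] at h
      linear_combination h
    have hP2 : ∀ x y w : V, polar q (m x y) (m x w) = q x * polar q y w := by
      intro x y w
      have h := hq x (y + w)
      rw [QuadraticMap.map_add q y w] at h
      simp only [map_add] at h
      rw [QuadraticMap.map_add q (m x y) (m x w), hq, hq] at h
      linear_combination h
    intro x y
    constructor
    · apply hsep
      intro w
      rw [hassoc, hP2, polar_smul_left, smul_eq_mul]
    · apply hsep
      intro w
      rw [polar_comm, ← hassoc, hP1, polar_smul_left, smul_eq_mul, polar_comm]
      ring
  · intro h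
    have h1 : ∀ x y : V, m (m x y) x = q x • y := fun x y => (h x y).1
    have h2 : ∀ x y : V, m x (m y x) = q x • y := fun x y => (h x y).2
    -- linearization of h1 in x
    have hA : ∀ x y z : V, m (m x y) z + m (m z y) x = polar q x z • y := by
      intro x y z
      have h := h1 (x + z) y
      simp only [map_add, LinearMap.add_apply, QuadraticMap.map_add q x z, add_smul] at h
      rw [h1, h1] at h
      -- h : q x • y + m (m x y) z + (m (m z y) x + q z • y) = ...
      abel_nf at h ⊢
      linear_combination (norm := abel_nf) h
    -- multiplicativity
    have hmul : ∀ x y : V, q (m x y) = q x * q y := by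
      intro x y
      rcases eq_or_ne x 0 with rfl | hx
      · simp
      · have key : q (m x y) • x = (q x * q y) • x := by
          have e1 : m (m (m x y) x) (m x y) = q (m x y) • x := h1 (m x y) x
          rw [h1 x y] at e1
          simp only [_root_.map_smul, LinearMap.smul_apply] at e1
          rw [h2 y x, smul_smul] at e1
          exact e1.symm
        exact smul_left_injective F hx key
    -- linearizations of multiplicativity
    have hP1 : ∀ x z y : V, polar q (m x y) (m z y) = polar q x z * q y := by
      intro x z y
      have h := hmul (x + z) y
      rw [QuadraticMap.map_add q x z] at h
      simp only [map_add, LinearMap.add_apply] at h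
      rw [QuadraticMap.map_add q (m x y) (m z y), hmul, hmul] at h
      linear_combination h
    have hP3 : ∀ x c y w : V, polar q (m x y) (m c w) + polar q (m x w) (m c y)
        = polar q x c * polar q y w := by
      intro x c y w
      have h := hP1 x c (y + w)
      simp only [map_add, polar_add_left, polar_add_right,
        QuadraticMap.map_add q y w] at h
      rw [hP1 x c y, hP1 x c w] at h
      linear_combination h
    -- associativity
    have hassoc : ∀ x y z : V, polar q (m x y) z = polar q x (m y z) := by
      intro x y z
      rcases eq_or_ne (q y) 0 with hy | hy
      · -- use the relation b(y,w) * D = 0 for all w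
        rcases eq_or_ne y 0 with rfl | hy0
        · simp
        · by_contra hD
          apply hy0
          apply hb
          intro w
          -- key relation
          have key : polar q (m x y) z * polar q y w =
              polar q x (m y z) * polar q y w
              - q y * polar q (m x w) z + q y * polar q x (m w z) := by
            have hAyzw : m (m y z) w + m (m w z) y = polar q y w • z := hA y z w
            have e : polar q (m x y) (m (m y z) w) + polar q (m x y) (m (m w z) y)
                = polar q y w * polar q (m x y) z := by
              rw [← polar_add_right, hAyzw, polar_smul_right, smul_eq_mul]
            have e1 : polar q (m x y) (m (m y z) w) =
                polar q x (m y z) * polar q y w - q y * polar q (m x w) z := by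
              have h3 := hP3 x (m y z) y w
              rw [show m (m y z) y = q y • z from h1 y z, polar_smul_right,
                smul_eq_mul] at h3
              linear_combination h3
            have e2 : polar q (m x y) (m (m w z) y) = polar q x (m w z) * q y :=
              hP1 x (m w z) y
            rw [e1, e2] at e
            linear_combination -e
          rw [hy] at key
          have : (polar q (m x y) z - polar q x (m y z)) * polar q y w = 0 := by
            linear_combination key
          rcases mul_eq_zero.mp this with h' | h'
          · exact absurd (by linear_combination h' : polar q (m x y) z = polar q x (m y z)) hD
          · exact h'
      · -- q y ≠ 0 : direct
        have key : polar q (m x y) z * q y = polar q x (m y z) * q y := by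
          have e : polar q (m x y) (m (m y z) y) = polar q x (m y z) * q y :=
            hP1 x (m y z) y
          rw [show m (m y z) y = q y • z from h1 y z, polar_smul_right,
            smul_eq_mul] at e
          linear_combination e
        exact mul_right_cancel₀ hy key
    exact ⟨hmul, hassoc⟩
end

section
/- For all trace-zero 3×3 matrices x, y, z over F: n(x*y) = n(x)·n(y), and b(x*y, z) = b(x, y*z), where b(x,y) = −tr(xy). That is, the Okubo algebra (sl₃(F), *, n) is a symmetric composition algebra: its norm is multiplicative and its polar form is associative. -/
set_option maxHeartbeats 2000000


variable {F : Type} [Field F]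

lemma nq_fin3 (M : Matrix (Fin 3) (Fin 3) F) :
    nq M = M 0 0 * M 1 1 + M 0 0 * M 2 2 + M 1 1 * M 2 2
      - M 0 1 * M 1 0 - M 0 2 * M 2 0 - M 1 2 * M 2 1 := by
  rw [nq, Matrix.charpoly, Matrix.det_fin_three]
  simp [Matrix.charmatrix_apply, Matrix.one_apply]
  ring_nf
  simp [Polynomial.coeff_one, Polynomial.coeff_X, Polynomial.coeff_C]
  ring

lemma okm_eq (ω c : F) (h : (ω - ω ^ 2) / 3 = c) (x y : Matrix (Fin 3) (Fin 3) F) :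
    okm ω x y = ω • (x * y) - ω ^ 2 • (y * x) -
      (c * (x * y).trace) • (1 : Matrix (Fin 3) (Fin 3) F) := by
  rw [okm, h]

/-- For trace-zero `3×3` matrices `x, y, z` over a field containing a
primitive cube root of unity `ω`: `n(x*y) = n(x)n(y)` and `b(x*y, z) = b(x, y*z)` where
`b(x,y) = -tr(xy)`; i.e. the Okubo algebra is a symmetric composition algebra. -/
theorem okubo_matrix_symmetric_composition (ω : F) (hω : ω ^ 2 + ω + 1 = 0) (hω1 : ω ≠ 1)
    (x y z : Matrix (Fin 3) (Fin 3) F)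
    (hx : x.trace = 0) (hy : y.trace = 0) (hz : z.trace = 0) :
    nq (okm ω x y) = nq x * nq y ∧
    -(okm ω x y * z).trace = -(x * okm ω y z).trace := by
  have h3 : (3 : F) ≠ 0 := by
    intro h
    apply hω1
    have h2 : (ω - 1) ^ 2 = 0 := by linear_combination hω - ω * h
    have h4 := pow_eq_zero_iff (n := 2) (by norm_num) |>.mp h2
    exact sub_eq_zero.mp h4
  obtain ⟨c, hcdef⟩ : ∃ c : F, (ω - ω ^ 2) / 3 = c := ⟨_, rfl⟩
  have hc : (3 : F) * c = ω - ω ^ 2 := by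
    rw [← hcdef]; field_simp
  rw [Matrix.trace_fin_three] at hx hy hz
  have hx2 : x 2 2 = -(x 0 0 + x 1 1) := by linear_combination hx
  have hy2 : y 2 2 = -(y 0 0 + y 1 1) := by linear_combination hy
  have hz2 : z 2 2 = -(z 0 0 + z 1 1) := by linear_combination hz
  have h9 : (9 : F) ≠ 0 := by
    intro h
    have h33 : (3 : F) * 3 = 0 := by linear_combination h
    exact h3 (mul_self_eq_zero.mp h33)
  constructor
  · rw [okm_eq ω c hcdef, nq_fin3, nq_fin3, nq_fin3]
    simp only [Matrix.sub_apply, Matrix.smul_apply, Matrix.mul_apply, Matrix.one_apply,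
      Fin.sum_univ_three, Matrix.trace_fin_three, smul_eq_mul, Fin.reduceEq, reduceIte,
      Fin.isValue, mul_one, mul_zero, sub_zero, if_true]
    rw [hx2, hy2]
    apply mul_left_cancel₀ h9
    linear_combination ((-9 : F) * x 1 2 * x 2 1 * y 1 2 * y 2 1 + (-9 : F) * x 1 2 * x 2 1 * y 1 1 ^ 2 + (-9 : F) * x 1 2 * x 2 1 * y 0 2 * y 2 0 + (-9 : F) * x 1 2 * x 2 1 * y 0 1 * y 1 0 + (-9 : F) * x 1 2 * x 2 1 * y 0 0 * y 1 1 + (-9 : F) * x 1 2 * x 2 1 * y 0 0 ^ 2 + (-9 : F) * x 1 1 ^ 2 * y 1 2 * y 2 1 + (-9 : F) * x 1 1 ^ 2 * y 1 1 ^ 2 + (-9 : F) * x 1 1 ^ 2 * y 0 2 * y 2 0 + (-9 : F) * x 1 1 ^ 2 * y 0 1 * y 1 0 + (-9 : F) * x 1 1 ^ 2 * y 0 0 * y 1 1 + (-9 : F) * x 1 1 ^ 2 * y 0 0 ^ 2 + (-9 : F) * x 0 2 * x 2 0 * y 1 2 * y 2 1 + (-9 : F) * x 0 2 * x 2 0 *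 y 1 1 ^ 2 + (-9 : F) * x 0 2 * x 2 0 * y 0 2 * y 2 0 + (-9 : F) * x 0 2 * x 2 0 * y 0 1 * y 1 0 + (-9 : F) * x 0 2 * x 2 0 * y 0 0 * y 1 1 + (-9 : F) * x 0 2 * x 2 0 * y 0 0 ^ 2 + (-9 : F) * x 0 1 * x 1 0 * y 1 2 * y 2 1 + (-9 : F) * x 0 1 * x 1 0 * y 1 1 ^ 2 + (-9 : F) * x 0 1 * x 1 0 * y 0 2 * y 2 0 + (-9 : F) * x 0 1 * x 1 0 * y 0 1 * y 1 0 + (-9 : F) * x 0 1 * x 1 0 * y 0 0 * y 1 1 + (-9 : F) * x 0 1 * x 1 0 * y 0 0 ^ 2 + (-9 : F) * x 0 0 * x 1 1 * y 1 2 * y 2 1 + (-9 : F) * x 0 0 * x 1 1 * y 1 1 ^ 2 + (-9 : F) * x 0 0 * x 1 1 * y 0 2 * y 2 0 + (-9 : F) * x 0 0 * x 1 1 * y 0 1 * y 1 0 + (-9 : F) * x 0 0 * x 1 1 * y 0 0 * y 1 1 + (-9 : F) * x 0 0 * x 1 1 * y 0 0 ^ 2 + (-9 : F) * x 0 0 ^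 2 * y 1 2 * y 2 1 + (-9 : F) * x 0 0 ^ 2 * y 1 1 ^ 2 + (-9 : F) * x 0 0 ^ 2 * y 0 2 * y 2 0 + (-9 : F) * x 0 0 ^ 2 * y 0 1 * y 1 0 + (-9 : F) * x 0 0 ^ 2 * y 0 0 * y 1 1 + (-9 : F) * x 0 0 ^ 2 * y 0 0 ^ 2 + (9 : F) * ω * x 1 2 * x 2 1 * y 1 2 * y 2 1 + (9 : F) * ω * x 1 2 * x 2 1 * y 1 1 ^ 2 + (9 : F) * ω * x 1 2 * x 2 1 * y 0 2 * y 2 0 + (9 : F) * ω * x 1 2 * x 2 1 * y 0 1 * y 1 0 + (9 : F) * ω * x 1 2 * x 2 1 * y 0 0 * y 1 1 + (9 : F) * ω * x 1 2 * x 2 1 * y 0 0 ^ 2 + (9 : F) * ω * x 1 1 ^ 2 * y 1 2 * y 2 1 + (9 : F) * ω * x 1 1 ^ 2 * y 1 1 ^ 2 + (9 : F) * ω * x 1 1 ^ 2 * y 0 2 * y 2 0 + (9 : F) * ω * x 1 1 ^ 2 * y 0 1 * y 1 0 + (9 : F) * ω * x 1 1 ^ 2 * y 0 0 * y 1 1 +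 (9 : F) * ω * x 1 1 ^ 2 * y 0 0 ^ 2 + (9 : F) * ω * x 0 2 * x 2 0 * y 1 2 * y 2 1 + (9 : F) * ω * x 0 2 * x 2 0 * y 1 1 ^ 2 + (9 : F) * ω * x 0 2 * x 2 0 * y 0 2 * y 2 0 + (9 : F) * ω * x 0 2 * x 2 0 * y 0 1 * y 1 0 + (9 : F) * ω * x 0 2 * x 2 0 * y 0 0 * y 1 1 + (9 : F) * ω * x 0 2 * x 2 0 * y 0 0 ^ 2 + (9 : F) * ω * x 0 1 * x 1 0 * y 1 2 * y 2 1 + (9 : F) * ω * x 0 1 * x 1 0 * y 1 1 ^ 2 + (9 : F) * ω * x 0 1 * x 1 0 * y 0 2 * y 2 0 + (9 : F) * ω * x 0 1 * x 1 0 * y 0 1 * y 1 0 + (9 : F) * ω * x 0 1 * x 1 0 * y 0 0 * y 1 1 + (9 : F) * ω * x 0 1 * x 1 0 * y 0 0 ^ 2 + (9 : F) * ω * x 0 0 * x 1 1 * y 1 2 * y 2 1 + (9 : F) * ω * x 0 0 * x 1 1 * y 1 1 ^ 2 + (9 : F) * ω * x 0 0 * x 1 1 * y 0 2 * y 2 0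 + (9 : F) * ω * x 0 0 * x 1 1 * y 0 1 * y 1 0 + (9 : F) * ω * x 0 0 * x 1 1 * y 0 0 * y 1 1 + (9 : F) * ω * x 0 0 * x 1 1 * y 0 0 ^ 2 + (9 : F) * ω * x 0 0 ^ 2 * y 1 2 * y 2 1 + (9 : F) * ω * x 0 0 ^ 2 * y 1 1 ^ 2 + (9 : F) * ω * x 0 0 ^ 2 * y 0 2 * y 2 0 + (9 : F) * ω * x 0 0 ^ 2 * y 0 1 * y 1 0 + (9 : F) * ω * x 0 0 ^ 2 * y 0 0 * y 1 1 + (9 : F) * ω * x 0 0 ^ 2 * y 0 0 ^ 2 + (-3 : F) * ω ^ 2 * x 2 1 ^ 2 * y 1 2 ^ 2 + (-6 : F) * ω ^ 2 * x 2 0 * x 2 1 * y 0 2 * y 1 2 + (-3 : F) * ω ^ 2 * x 2 0 ^ 2 * y 0 2 ^ 2 + (3 : F) * ω ^ 2 * x 1 2 * x 2 1 * y 1 2 * y 2 1 + (9 : F) * ω ^ 2 * x 1 2 * x 2 1 * y 1 1 ^ 2 + (9 : F) * ω ^ 2 * x 1 2 * x 2 1 * y 0 0 * y 1 1 + (3 :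 F) * ω ^ 2 * x 1 2 * x 2 0 * y 0 2 * y 2 1 + (9 : F) * ω ^ 2 * x 1 2 * x 2 0 * y 0 1 * y 1 1 + (9 : F) * ω ^ 2 * x 1 2 * x 2 0 * y 0 0 * y 0 1 + (-3 : F) * ω ^ 2 * x 1 2 ^ 2 * y 2 1 ^ 2 + (-12 : F) * ω ^ 2 * x 1 1 * x 2 1 * y 1 1 * y 1 2 + (-6 : F) * ω ^ 2 * x 1 1 * x 2 1 * y 0 0 * y 1 2 + (-3 : F) * ω ^ 2 * x 1 1 * x 2 0 * y 0 2 * y 1 1 + (-9 : F) * ω ^ 2 * x 1 1 * x 2 0 * y 0 1 * y 1 2 + (-6 : F) * ω ^ 2 * x 1 1 * x 2 0 * y 0 0 * y 0 2 + (-12 : F) * ω ^ 2 * x 1 1 * x 1 2 * y 1 1 * y 2 1 + (-6 : F) * ω ^ 2 * x 1 1 * x 1 2 * y 0 0 * y 2 1 + (9 : F) * ω ^ 2 * x 1 1 ^ 2 * y 1 2 * y 2 1 + (-3 : F) * ω ^ 2 * x 1 1 ^ 2 * y 1 1 ^ 2 + (-3 : F) * ω ^ 2 * x 1 1 ^ 2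 * y 0 0 * y 1 1 + (-3 : F) * ω ^ 2 * x 1 1 ^ 2 * y 0 0 ^ 2 + (-9 : F) * ω ^ 2 * x 1 0 * x 2 1 * y 0 2 * y 1 1 + (3 : F) * ω ^ 2 * x 1 0 * x 2 1 * y 0 1 * y 1 2 + (-6 : F) * ω ^ 2 * x 1 0 * x 2 0 * y 0 1 * y 0 2 + (-6 : F) * ω ^ 2 * x 1 0 * x 1 2 * y 0 1 * y 2 1 + (9 : F) * ω ^ 2 * x 1 0 * x 1 1 * y 0 2 * y 2 1 + (-3 : F) * ω ^ 2 * x 1 0 * x 1 1 * y 0 1 * y 1 1 + (3 : F) * ω ^ 2 * x 1 0 * x 1 1 * y 0 0 * y 0 1 + (-3 : F) * ω ^ 2 * x 1 0 ^ 2 * y 0 1 ^ 2 + (3 : F) * ω ^ 2 * x 0 2 * x 2 1 * y 1 2 * y 2 0 + (9 : F) * ω ^ 2 * x 0 2 * x 2 1 * y 1 0 * y 1 1 + (9 : F) * ω ^ 2 * x 0 2 * x 2 1 * y 0 0 * y 1 0 + (3 : F) * ω ^ 2 * x 0 2 * x 2 0 * y 0 2 * y 2 0 + (9 : F) * ω ^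 2 * x 0 2 * x 2 0 * y 0 0 * y 1 1 + (9 : F) * ω ^ 2 * x 0 2 * x 2 0 * y 0 0 ^ 2 + (-6 : F) * ω ^ 2 * x 0 2 * x 1 2 * y 2 0 * y 2 1 + (-3 : F) * ω ^ 2 * x 0 2 * x 1 1 * y 1 1 * y 2 0 + (-9 : F) * ω ^ 2 * x 0 2 * x 1 1 * y 1 0 * y 2 1 + (-6 : F) * ω ^ 2 * x 0 2 * x 1 1 * y 0 0 * y 2 0 + (3 : F) * ω ^ 2 * x 0 2 * x 1 0 * y 0 1 * y 2 0 + (-9 : F) * ω ^ 2 * x 0 2 * x 1 0 * y 0 0 * y 2 1 + (-3 : F) * ω ^ 2 * x 0 2 ^ 2 * y 2 0 ^ 2 + (-6 : F) * ω ^ 2 * x 0 1 * x 2 1 * y 1 0 * y 1 2 + (3 : F) * ω ^ 2 * x 0 1 * x 2 0 * y 0 2 * y 1 0 + (-9 : F) * ω ^ 2 * x 0 1 * x 2 0 * y 0 0 * y 1 2 + (-9 : F) * ω ^ 2 * x 0 1 * x 1 2 * y 1 1 * y 2 0 + (3 : F) * ω ^ 2 * x 0 1 * x 1 2 * y 1 0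 * y 2 1 + (9 : F) * ω ^ 2 * x 0 1 * x 1 1 * y 1 2 * y 2 0 + (-3 : F) * ω ^ 2 * x 0 1 * x 1 1 * y 1 0 * y 1 1 + (3 : F) * ω ^ 2 * x 0 1 * x 1 1 * y 0 0 * y 1 0 + (3 : F) * ω ^ 2 * x 0 1 * x 1 0 * y 0 1 * y 1 0 + (-9 : F) * ω ^ 2 * x 0 1 * x 1 0 * y 0 0 * y 1 1 + (-6 : F) * ω ^ 2 * x 0 1 * x 0 2 * y 1 0 * y 2 0 + (-3 : F) * ω ^ 2 * x 0 1 ^ 2 * y 1 0 ^ 2 + (-6 : F) * ω ^ 2 * x 0 0 * x 2 1 * y 1 1 * y 1 2 + (-9 : F) * ω ^ 2 * x 0 0 * x 2 1 * y 0 2 * y 1 0 + (-3 : F) * ω ^ 2 * x 0 0 * x 2 1 * y 0 0 * y 1 2 + (-6 : F) * ω ^ 2 * x 0 0 * x 2 0 * y 0 2 * y 1 1 + (-12 : F) * ω ^ 2 * x 0 0 * x 2 0 * y 0 0 * y 0 2 + (-6 : F) * ω ^ 2 * x 0 0 * x 1 2 * y 1 1 * y 2 1 + (-9 : F) * ω ^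 2 * x 0 0 * x 1 2 * y 0 1 * y 2 0 + (-3 : F) * ω ^ 2 * x 0 0 * x 1 2 * y 0 0 * y 2 1 + (9 : F) * ω ^ 2 * x 0 0 * x 1 1 * y 1 2 * y 2 1 + (-3 : F) * ω ^ 2 * x 0 0 * x 1 1 * y 1 1 ^ 2 + (9 : F) * ω ^ 2 * x 0 0 * x 1 1 * y 0 2 * y 2 0 + (-9 : F) * ω ^ 2 * x 0 0 * x 1 1 * y 0 1 * y 1 0 + (-3 : F) * ω ^ 2 * x 0 0 * x 1 1 * y 0 0 * y 1 1 + (-3 : F) * ω ^ 2 * x 0 0 * x 1 1 * y 0 0 ^ 2 + (9 : F) * ω ^ 2 * x 0 0 * x 1 0 * y 0 2 * y 2 1 + (3 : F) * ω ^ 2 * x 0 0 * x 1 0 * y 0 1 * y 1 1 + (-3 : F) * ω ^ 2 * x 0 0 * x 1 0 * y 0 0 * y 0 1 + (-6 : F) * ω ^ 2 * x 0 0 * x 0 2 * y 1 1 * y 2 0 + (-12 : F) * ω ^ 2 * x 0 0 * x 0 2 * y 0 0 * y 2 0 + (9 : F) * ω ^ 2 * x 0 0 * x 0 1 * y 1 2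 * y 2 0 + (3 : F) * ω ^ 2 * x 0 0 * x 0 1 * y 1 0 * y 1 1 + (-3 : F) * ω ^ 2 * x 0 0 * x 0 1 * y 0 0 * y 1 0 + (-3 : F) * ω ^ 2 * x 0 0 ^ 2 * y 1 1 ^ 2 + (9 : F) * ω ^ 2 * x 0 0 ^ 2 * y 0 2 * y 2 0 + (-3 : F) * ω ^ 2 * x 0 0 ^ 2 * y 0 0 * y 1 1 + (-3 : F) * ω ^ 2 * x 0 0 ^ 2 * y 0 0 ^ 2) * hω + ((9 : F) * c * x 2 1 ^ 2 * y 1 2 ^ 2 + (18 : F) * c * x 2 0 * x 2 1 * y 0 2 * y 1 2 + (9 : F) * c * x 2 0 ^ 2 * y 0 2 ^ 2 + (18 : F) * c * x 1 2 * x 2 1 * y 1 2 * y 2 1 + (18 : F) * c * x 1 2 * x 2 0 * y 0 2 * y 2 1 + (9 : F) * c * x 1 2 ^ 2 * y 2 1 ^ 2 + (36 : F) * c * x 1 1 * x 2 1 * y 1 1 * y 1 2 + (18 : F) * c * x 1 1 * x 2 1 * y 0 0 * y 1 2 + (36 : F) * c * x 1 1 * x 2 0 * y 0 2 * y 1 1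 + (18 : F) * c * x 1 1 * x 2 0 * y 0 0 * y 0 2 + (36 : F) * c * x 1 1 * x 1 2 * y 1 1 * y 2 1 + (18 : F) * c * x 1 1 * x 1 2 * y 0 0 * y 2 1 + (36 : F) * c * x 1 1 ^ 2 * y 1 1 ^ 2 + (36 : F) * c * x 1 1 ^ 2 * y 0 0 * y 1 1 + (9 : F) * c * x 1 1 ^ 2 * y 0 0 ^ 2 + (18 : F) * c * x 1 0 * x 2 1 * y 0 1 * y 1 2 + (18 : F) * c * x 1 0 * x 2 0 * y 0 1 * y 0 2 + (18 : F) * c * x 1 0 * x 1 2 * y 0 1 * y 2 1 + (36 : F) * c * x 1 0 * x 1 1 * y 0 1 * y 1 1 + (18 : F) * c * x 1 0 * x 1 1 * y 0 0 * y 0 1 + (9 : F) * c * x 1 0 ^ 2 * y 0 1 ^ 2 + (18 : F) * c * x 0 2 * x 2 1 * y 1 2 * y 2 0 + (18 : F) * c * x 0 2 * x 2 0 * y 0 2 * y 2 0 + (18 : F) * c * x 0 2 * x 1 2 * y 2 0 * y 2 1 + (36 : F) * c * x 0 2 * x 1 1 * y 1 1 * y 2 0 + (18 : F) * c * x 0 2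 * x 1 1 * y 0 0 * y 2 0 + (18 : F) * c * x 0 2 * x 1 0 * y 0 1 * y 2 0 + (9 : F) * c * x 0 2 ^ 2 * y 2 0 ^ 2 + (18 : F) * c * x 0 1 * x 2 1 * y 1 0 * y 1 2 + (18 : F) * c * x 0 1 * x 2 0 * y 0 2 * y 1 0 + (18 : F) * c * x 0 1 * x 1 2 * y 1 0 * y 2 1 + (36 : F) * c * x 0 1 * x 1 1 * y 1 0 * y 1 1 + (18 : F) * c * x 0 1 * x 1 1 * y 0 0 * y 1 0 + (18 : F) * c * x 0 1 * x 1 0 * y 0 1 * y 1 0 + (18 : F) * c * x 0 1 * x 0 2 * y 1 0 * y 2 0 + (9 : F) * c * x 0 1 ^ 2 * y 1 0 ^ 2 + (18 : F) * c * x 0 0 * x 2 1 * y 1 1 * y 1 2 + (36 : F) * c * x 0 0 * x 2 1 * y 0 0 * y 1 2 + (18 : F) * c * x 0 0 * x 2 0 * y 0 2 * y 1 1 + (36 : F) * c * x 0 0 * x 2 0 * y 0 0 * y 0 2 + (18 : F) * c * x 0 0 * x 1 2 * y 1 1 * y 2 1 + (36 : F) * c * x 0 0 * x 1 2 * y 0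 0 * y 2 1 + (36 : F) * c * x 0 0 * x 1 1 * y 1 1 ^ 2 + (90 : F) * c * x 0 0 * x 1 1 * y 0 0 * y 1 1 + (36 : F) * c * x 0 0 * x 1 1 * y 0 0 ^ 2 + (18 : F) * c * x 0 0 * x 1 0 * y 0 1 * y 1 1 + (36 : F) * c * x 0 0 * x 1 0 * y 0 0 * y 0 1 + (18 : F) * c * x 0 0 * x 0 2 * y 1 1 * y 2 0 + (36 : F) * c * x 0 0 * x 0 2 * y 0 0 * y 2 0 + (18 : F) * c * x 0 0 * x 0 1 * y 1 0 * y 1 1 + (36 : F) * c * x 0 0 * x 0 1 * y 0 0 * y 1 0 + (9 : F) * c * x 0 0 ^ 2 * y 1 1 ^ 2 + (36 : F) * c * x 0 0 ^ 2 * y 0 0 * y 1 1 + (36 : F) * c * x 0 0 ^ 2 * y 0 0 ^ 2 + (-3 : F) * ω * x 2 1 ^ 2 * y 1 2 ^ 2 + (-6 : F) * ω * x 2 0 * x 2 1 * y 0 2 * y 1 2 + (-3 : F) * ω * x 2 0 ^ 2 * y 0 2 ^ 2 + (-6 : F) * ω * x 1 2 * x 2 1 * y 1 2 * y 2 1 +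 (-6 : F) * ω * x 1 2 * x 2 0 * y 0 2 * y 2 1 + (-3 : F) * ω * x 1 2 ^ 2 * y 2 1 ^ 2 + (-12 : F) * ω * x 1 1 * x 2 1 * y 1 1 * y 1 2 + (-6 : F) * ω * x 1 1 * x 2 1 * y 0 0 * y 1 2 + (-12 : F) * ω * x 1 1 * x 2 0 * y 0 2 * y 1 1 + (-6 : F) * ω * x 1 1 * x 2 0 * y 0 0 * y 0 2 + (-12 : F) * ω * x 1 1 * x 1 2 * y 1 1 * y 2 1 + (-6 : F) * ω * x 1 1 * x 1 2 * y 0 0 * y 2 1 + (-12 : F) * ω * x 1 1 ^ 2 * y 1 1 ^ 2 + (-12 : F) * ω * x 1 1 ^ 2 * y 0 0 * y 1 1 + (-3 : F) * ω * x 1 1 ^ 2 * y 0 0 ^ 2 + (-6 : F) * ω * x 1 0 * x 2 1 * y 0 1 * y 1 2 + (-6 : F) * ω * x 1 0 * x 2 0 * y 0 1 * y 0 2 + (-6 : F) * ω * x 1 0 * x 1 2 * y 0 1 * y 2 1 + (-12 : F) * ω * x 1 0 * x 1 1 * y 0 1 * y 1 1 + (-6 : F) * ω * x 1 0 * x 1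 1 * y 0 0 * y 0 1 + (-3 : F) * ω * x 1 0 ^ 2 * y 0 1 ^ 2 + (-6 : F) * ω * x 0 2 * x 2 1 * y 1 2 * y 2 0 + (-6 : F) * ω * x 0 2 * x 2 0 * y 0 2 * y 2 0 + (-6 : F) * ω * x 0 2 * x 1 2 * y 2 0 * y 2 1 + (-12 : F) * ω * x 0 2 * x 1 1 * y 1 1 * y 2 0 + (-6 : F) * ω * x 0 2 * x 1 1 * y 0 0 * y 2 0 + (-6 : F) * ω * x 0 2 * x 1 0 * y 0 1 * y 2 0 + (-3 : F) * ω * x 0 2 ^ 2 * y 2 0 ^ 2 + (-6 : F) * ω * x 0 1 * x 2 1 * y 1 0 * y 1 2 + (-6 : F) * ω * x 0 1 * x 2 0 * y 0 2 * y 1 0 + (-6 : F) * ω * x 0 1 * x 1 2 * y 1 0 * y 2 1 + (-12 : F) * ω * x 0 1 * x 1 1 * y 1 0 * y 1 1 + (-6 : F) * ω * x 0 1 * x 1 1 * y 0 0 * y 1 0 + (-6 : F) * ω * x 0 1 * x 1 0 * y 0 1 * y 1 0 + (-6 : F) * ω * x 0 1 * x 0 2 * y 1 0 * y 2 0 + (-3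 : F) * ω * x 0 1 ^ 2 * y 1 0 ^ 2 + (-6 : F) * ω * x 0 0 * x 2 1 * y 1 1 * y 1 2 + (-12 : F) * ω * x 0 0 * x 2 1 * y 0 0 * y 1 2 + (-6 : F) * ω * x 0 0 * x 2 0 * y 0 2 * y 1 1 + (-12 : F) * ω * x 0 0 * x 2 0 * y 0 0 * y 0 2 + (-6 : F) * ω * x 0 0 * x 1 2 * y 1 1 * y 2 1 + (-12 : F) * ω * x 0 0 * x 1 2 * y 0 0 * y 2 1 + (-12 : F) * ω * x 0 0 * x 1 1 * y 1 1 ^ 2 + (-30 : F) * ω * x 0 0 * x 1 1 * y 0 0 * y 1 1 + (-12 : F) * ω * x 0 0 * x 1 1 * y 0 0 ^ 2 + (-6 : F) * ω * x 0 0 * x 1 0 * y 0 1 * y 1 1 + (-12 : F) * ω * x 0 0 * x 1 0 * y 0 0 * y 0 1 + (-6 : F) * ω * x 0 0 * x 0 2 * y 1 1 * y 2 0 + (-12 : F) * ω * x 0 0 * x 0 2 * y 0 0 * y 2 0 + (-6 : F) * ω * x 0 0 * x 0 1 * y 1 0 * y 1 1 + (-12 : F) * ω * x 0 0 * x 0 1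 * y 0 0 * y 1 0 + (-3 : F) * ω * x 0 0 ^ 2 * y 1 1 ^ 2 + (-12 : F) * ω * x 0 0 ^ 2 * y 0 0 * y 1 1 + (-12 : F) * ω * x 0 0 ^ 2 * y 0 0 ^ 2 + (3 : F) * ω ^ 2 * x 2 1 ^ 2 * y 1 2 ^ 2 + (6 : F) * ω ^ 2 * x 2 0 * x 2 1 * y 0 2 * y 1 2 + (3 : F) * ω ^ 2 * x 2 0 ^ 2 * y 0 2 ^ 2 + (6 : F) * ω ^ 2 * x 1 2 * x 2 1 * y 1 2 * y 2 1 + (6 : F) * ω ^ 2 * x 1 2 * x 2 0 * y 0 2 * y 2 1 + (3 : F) * ω ^ 2 * x 1 2 ^ 2 * y 2 1 ^ 2 + (12 : F) * ω ^ 2 * x 1 1 * x 2 1 * y 1 1 * y 1 2 + (6 : F) * ω ^ 2 * x 1 1 * x 2 1 * y 0 0 * y 1 2 + (12 : F) * ω ^ 2 * x 1 1 * x 2 0 * y 0 2 * y 1 1 + (6 : F) * ω ^ 2 * x 1 1 * x 2 0 * y 0 0 * y 0 2 + (12 : F) * ω ^ 2 * x 1 1 * x 1 2 * y 1 1 * y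 2 1 + (6 : F) * ω ^ 2 * x 1 1 * x 1 2 * y 0 0 * y 2 1 + (12 : F) * ω ^ 2 * x 1 1 ^ 2 * y 1 1 ^ 2 + (12 : F) * ω ^ 2 * x 1 1 ^ 2 * y 0 0 * y 1 1 + (3 : F) * ω ^ 2 * x 1 1 ^ 2 * y 0 0 ^ 2 + (6 : F) * ω ^ 2 * x 1 0 * x 2 1 * y 0 1 * y 1 2 + (6 : F) * ω ^ 2 * x 1 0 * x 2 0 * y 0 1 * y 0 2 + (6 : F) * ω ^ 2 * x 1 0 * x 1 2 * y 0 1 * y 2 1 + (12 : F) * ω ^ 2 * x 1 0 * x 1 1 * y 0 1 * y 1 1 + (6 : F) * ω ^ 2 * x 1 0 * x 1 1 * y 0 0 * y 0 1 + (3 : F) * ω ^ 2 * x 1 0 ^ 2 * y 0 1 ^ 2 + (6 : F) * ω ^ 2 * x 0 2 * x 2 1 * y 1 2 * y 2 0 + (6 : F) * ω ^ 2 * x 0 2 * x 2 0 * y 0 2 * y 2 0 + (6 : F) * ω ^ 2 * x 0 2 * x 1 2 * y 2 0 * y 2 1 + (12 : F) * ω ^ 2 * x 0 2 * x 1 1 *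 y 1 1 * y 2 0 + (6 : F) * ω ^ 2 * x 0 2 * x 1 1 * y 0 0 * y 2 0 + (6 : F) * ω ^ 2 * x 0 2 * x 1 0 * y 0 1 * y 2 0 + (3 : F) * ω ^ 2 * x 0 2 ^ 2 * y 2 0 ^ 2 + (6 : F) * ω ^ 2 * x 0 1 * x 2 1 * y 1 0 * y 1 2 + (6 : F) * ω ^ 2 * x 0 1 * x 2 0 * y 0 2 * y 1 0 + (6 : F) * ω ^ 2 * x 0 1 * x 1 2 * y 1 0 * y 2 1 + (12 : F) * ω ^ 2 * x 0 1 * x 1 1 * y 1 0 * y 1 1 + (6 : F) * ω ^ 2 * x 0 1 * x 1 1 * y 0 0 * y 1 0 + (6 : F) * ω ^ 2 * x 0 1 * x 1 0 * y 0 1 * y 1 0 + (6 : F) * ω ^ 2 * x 0 1 * x 0 2 * y 1 0 * y 2 0 + (3 : F) * ω ^ 2 * x 0 1 ^ 2 * y 1 0 ^ 2 + (6 : F) * ω ^ 2 * x 0 0 * x 2 1 * y 1 1 * y 1 2 + (12 : F) * ω ^ 2 * x 0 0 * x 2 1 * y 0 0 * y 1 2 + (6 : F) * ω ^ 2 * x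 0 0 * x 2 0 * y 0 2 * y 1 1 + (12 : F) * ω ^ 2 * x 0 0 * x 2 0 * y 0 0 * y 0 2 + (6 : F) * ω ^ 2 * x 0 0 * x 1 2 * y 1 1 * y 2 1 + (12 : F) * ω ^ 2 * x 0 0 * x 1 2 * y 0 0 * y 2 1 + (12 : F) * ω ^ 2 * x 0 0 * x 1 1 * y 1 1 ^ 2 + (30 : F) * ω ^ 2 * x 0 0 * x 1 1 * y 0 0 * y 1 1 + (12 : F) * ω ^ 2 * x 0 0 * x 1 1 * y 0 0 ^ 2 + (6 : F) * ω ^ 2 * x 0 0 * x 1 0 * y 0 1 * y 1 1 + (12 : F) * ω ^ 2 * x 0 0 * x 1 0 * y 0 0 * y 0 1 + (6 : F) * ω ^ 2 * x 0 0 * x 0 2 * y 1 1 * y 2 0 + (12 : F) * ω ^ 2 * x 0 0 * x 0 2 * y 0 0 * y 2 0 + (6 : F) * ω ^ 2 * x 0 0 * x 0 1 * y 1 0 * y 1 1 + (12 : F) * ω ^ 2 * x 0 0 * x 0 1 * y 0 0 * y 1 0 + (3 : F) * ω ^ 2 * x 0 0 ^ 2 * y 1 1 ^ 2 + (12 : F)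 * ω ^ 2 * x 0 0 ^ 2 * y 0 0 * y 1 1 + (12 : F) * ω ^ 2 * x 0 0 ^ 2 * y 0 0 ^ 2) * hc
  · rw [okm_eq ω c hcdef, okm_eq ω c hcdef]
    simp only [Matrix.sub_apply, Matrix.smul_apply, Matrix.mul_apply, Matrix.one_apply,
      Fin.sum_univ_three, Matrix.trace_fin_three, smul_eq_mul, Fin.reduceEq, reduceIte,
      Fin.isValue, mul_one, mul_zero, sub_zero, if_true]
    rw [hx2, hy2, hz2]
    ring
end

section
/- Over any field F, the split Okubo algebra satisfies (x*y)*x = n(x)•y and x*(y*x) = n(x)•y for all x, y ∈ O; consequently n(x*y) = n(x)·n(y) and b(x*y, z) = b(x, y*z) for all x, y, z ∈ O, i.e., (O, *, n) is a symmetric composition algebra. -/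
open scoped BigOperators

/-- The grading group `ℤ₃ × ℤ₃`. -/
abbrev OkG : Type := ZMod 3 × ZMod 3

/-- The index set of the standard basis of the split Okubo algebra:
the nonzero elements of `ℤ₃ × ℤ₃`. -/
abbrev OkI : Type := {g : OkG // g ≠ 0}

variable (R : Type) [CommRing R]

/-- The structure constants `c(g,h) = 1 - ((g₁h₂ - g₂h₁).val : ℤ)` of the split Okubo algebra. -/
def okc (g h : OkG) : R :=
  ((1 - (((g.1 * h.2 - g.2 * h.1 : ZMod 3)).val : ℤ) : ℤ) : R)

/-- Underlying function of the split Okubo multiplication. -/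
def okMulFun (x y : OkI → R) : OkI → R := fun k =>
  ∑ g : OkI, ∑ h : OkI,
    (if (g : OkG) + (h : OkG) = (k : OkG) then okc R (g : OkG) (h : OkG) else 0) * (x g * y h)

/-- The split Okubo multiplication, as a bilinear map: the unique `R`-bilinear map with
`e_g * e_h = 0` if `g + h = 0` and `e_g * e_h = c(g,h) • e_(g+h)` otherwise. -/
def okMul : (OkI → R) →ₗ[R] (OkI → R) →ₗ[R] (OkI → R) :=
  LinearMap.mk₂ R (okMulFun R)
    (by intro m₁ m₂ n; funext k; simp [okMulFun, add_mul, mul_add, Finset.sum_add_distrib])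
    (by intro c m n; funext k
        simp only [okMulFun, Pi.smul_apply, smul_eq_mul, Finset.mul_sum]
        exact Finset.sum_congr rfl fun g _ => Finset.sum_congr rfl fun h _ => by ring)
    (by intro m n₁ n₂; funext k; simp [okMulFun, add_mul, mul_add, Finset.sum_add_distrib])
    (by intro c m n; funext k
        simp only [okMulFun, Pi.smul_apply, smul_eq_mul, Finset.mul_sum]
        exact Finset.sum_congr rfl fun g _ => Finset.sum_congr rfl fun h _ => by ring)

/-- The norm (quadratic form) of the split Okubo algebra: the unique quadratic form
with `n(e_g) = 0` and polar form `b(e_g, e_h) = 1` if `g + h = 0`, and `0` otherwise. -/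
def okN (x : OkI → R) : R :=
  x ⟨(1, 0), by decide⟩ * x ⟨(2, 0), by decide⟩ +
  x ⟨(0, 1), by decide⟩ * x ⟨(0, 2), by decide⟩ +
  x ⟨(1, 1), by decide⟩ * x ⟨(2, 2), by decide⟩ +
  x ⟨(1, 2), by decide⟩ * x ⟨(2, 1), by decide⟩

/-- The polar form of the norm `okN`. -/
def okB (x y : OkI → R) : R := okN R (x + y) - okN R x - okN R y

/-- The basis element `e_g` of the split Okubo algebra. -/
def okE (g : OkI) : OkI → R := Pi.single g 1

/-- The sum `e = ∑_{g ∈ I} e_g` of all eight basis elements. -/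
def oke : OkI → R := ∑ g : OkI, okE R g


lemma sum_okI {M : Type*} [AddCommMonoid M] (f : OkI → M) :
    ∑ g : OkI, f g =
      f ⟨(0,1), by decide⟩ + f ⟨(0,2), by decide⟩ + f ⟨(1,0), by decide⟩ +
      f ⟨(1,1), by decide⟩ + f ⟨(1,2), by decide⟩ + f ⟨(2,0), by decide⟩ +
      f ⟨(2,1), by decide⟩ + f ⟨(2,2), by decide⟩ := by
  have h := Fintype.sum_bijective
    (![⟨(0,1), by decide⟩, ⟨(0,2), by decide⟩, ⟨(1,0), by decide⟩, ⟨(1,1), by decide⟩,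
       ⟨(1,2), by decide⟩, ⟨(2,0), by decide⟩, ⟨(2,1), by decide⟩, ⟨(2,2), by decide⟩] :
       Fin 8 → OkI) (by decide) _ f (fun _ => rfl)
  rw [← h, Fin.sum_univ_eight]
  rfl

lemma okc_eq (g h : OkG) : okc R g h =
    if g.1 * h.2 - g.2 * h.1 = 0 then 1
    else if g.1 * h.2 - g.2 * h.1 = 1 then 0 else -1 := by
  rw [okc]
  have tri : ∀ d : ZMod 3, d = 0 ∨ d = 1 ∨ d = 2 := by decide
  rcases tri (g.1 * h.2 - g.2 * h.1) with h'|h'|h' <;> rw [h']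
  · rw [if_pos rfl, show (((0 : ZMod 3)).val : ℤ) = 0 from rfl]; norm_num
  · rw [if_neg (by decide), if_pos rfl, show (((1 : ZMod 3)).val : ℤ) = 1 from rfl]; norm_num
  · rw [if_neg (by decide), if_neg (by decide), show (((2 : ZMod 3)).val : ℤ) = 2 from rfl]
    norm_num

lemma okMul_apply_01 (x y : OkI → R) :
    okMul R x y ⟨(0,1), by decide⟩ = x ⟨(0,2), by decide⟩ * y ⟨(0,2), by decide⟩ - x ⟨(2,0), by decide⟩ * y ⟨(1,1), by decide⟩ - x ⟨(2,1), by decide⟩ * y ⟨(1,0), by decide⟩ - x ⟨(2,2), by decide⟩ * y ⟨(1,2), by decide⟩ := by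
  show okMulFun R x y _ = _
  rw [okMulFun]
  simp only [sum_okI, okc_eq]
  simp (config := { decide := true }) only [if_true, if_false, ite_true, ite_false]
  ring

lemma okMul_apply_02 (x y : OkI → R) :
    okMul R x y ⟨(0,2), by decide⟩ = x ⟨(0,1), by decide⟩ * y ⟨(0,1), by decide⟩ - x ⟨(1,0), by decide⟩ * y ⟨(2,2), by decide⟩ - x ⟨(1,1), by decide⟩ * y ⟨(2,1), by decide⟩ - x ⟨(1,2), by decide⟩ * y ⟨(2,0), by decide⟩ := by
  show okMulFun R x y _ = _
  rw [okMulFun]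
  simp only [sum_okI, okc_eq]
  simp (config := { decide := true }) only [if_true, if_false, ite_true, ite_false]
  ring

lemma okMul_apply_10 (x y : OkI → R) :
    okMul R x y ⟨(1,0), by decide⟩ = -(x ⟨(0,1), by decide⟩ * y ⟨(1,2), by decide⟩) - x ⟨(1,1), by decide⟩ * y ⟨(0,2), by decide⟩ + x ⟨(2,0), by decide⟩ * y ⟨(2,0), by decide⟩ - x ⟨(2,1), by decide⟩ * y ⟨(2,2), by decide⟩ := by
  show okMulFun R x y _ = _
  rw [okMulFun]
  simp only [sum_okI, okc_eq]
  simp (config := { decide := true }) only [if_true, if_false, ite_true, ite_false]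
  ring

lemma okMul_apply_11 (x y : OkI → R) :
    okMul R x y ⟨(1,1), by decide⟩ = -(x ⟨(0,1), by decide⟩ * y ⟨(1,0), by decide⟩) - x ⟨(1,2), by decide⟩ * y ⟨(0,2), by decide⟩ - x ⟨(2,0), by decide⟩ * y ⟨(2,1), by decide⟩ + x ⟨(2,2), by decide⟩ * y ⟨(2,2), by decide⟩ := by
  show okMulFun R x y _ = _
  rw [okMulFun]
  simp only [sum_okI, okc_eq]
  simp (config := { decide := true }) only [if_true, if_false, ite_true, ite_false]
  ring

lemma okMul_apply_12 (x y : OkI → R) :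
    okMul R x y ⟨(1,2), by decide⟩ = -(x ⟨(0,1), by decide⟩ * y ⟨(1,1), by decide⟩) - x ⟨(1,0), by decide⟩ * y ⟨(0,2), by decide⟩ + x ⟨(2,1), by decide⟩ * y ⟨(2,1), by decide⟩ - x ⟨(2,2), by decide⟩ * y ⟨(2,0), by decide⟩ := by
  show okMulFun R x y _ = _
  rw [okMulFun]
  simp only [sum_okI, okc_eq]
  simp (config := { decide := true }) only [if_true, if_false, ite_true, ite_false]
  ring

lemma okMul_apply_20 (x y : OkI → R) :
    okMul R x y ⟨(2,0), by decide⟩ = -(x ⟨(0,2), by decide⟩ * y ⟨(2,1), by decide⟩) + x ⟨(1,0), by decide⟩ * y ⟨(1,0), by decide⟩ - x ⟨(1,2), by decide⟩ * y ⟨(1,1), by decide⟩ - x ⟨(2,2), by decide⟩ * y ⟨(0,1), by decide⟩ := by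
  show okMulFun R x y _ = _
  rw [okMulFun]
  simp only [sum_okI, okc_eq]
  simp (config := { decide := true }) only [if_true, if_false, ite_true, ite_false]
  ring

lemma okMul_apply_21 (x y : OkI → R) :
    okMul R x y ⟨(2,1), by decide⟩ = -(x ⟨(0,2), by decide⟩ * y ⟨(2,2), by decide⟩) - x ⟨(1,1), by decide⟩ * y ⟨(1,0), by decide⟩ + x ⟨(1,2), by decide⟩ * y ⟨(1,2), by decide⟩ - x ⟨(2,0), by decide⟩ * y ⟨(0,1), by decide⟩ := by
  show okMulFun R x y _ = _
  rw [okMulFun]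
  simp only [sum_okI, okc_eq]
  simp (config := { decide := true }) only [if_true, if_false, ite_true, ite_false]
  ring

lemma okMul_apply_22 (x y : OkI → R) :
    okMul R x y ⟨(2,2), by decide⟩ = -(x ⟨(0,2), by decide⟩ * y ⟨(2,0), by decide⟩) - x ⟨(1,0), by decide⟩ * y ⟨(1,2), by decide⟩ + x ⟨(1,1), by decide⟩ * y ⟨(1,1), by decide⟩ - x ⟨(2,1), by decide⟩ * y ⟨(0,1), by decide⟩ := by
  show okMulFun R x y _ = _
  rw [okMulFun]
  simp only [sum_okI, okc_eq]
  simp (config := { decide := true }) only [if_true, if_false, ite_true, ite_false]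
  ring

lemma okI_cases (k : OkI) :
    k = ⟨(0,1), by decide⟩ ∨ k = ⟨(0,2), by decide⟩ ∨ k = ⟨(1,0), by decide⟩ ∨
    k = ⟨(1,1), by decide⟩ ∨ k = ⟨(1,2), by decide⟩ ∨ k = ⟨(2,0), by decide⟩ ∨
    k = ⟨(2,1), by decide⟩ ∨ k = ⟨(2,2), by decide⟩ := by
  revert k; decide

/-- Over any field `F`, the split Okubo algebra satisfies
`(x*y)*x = n(x) • y = x*(y*x)`; consequently the norm is multiplicative and its polar
form is associative, i.e. `(O, *, n)` is a symmetric composition algebra. -/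
theorem okubo_symmetric_composition (F : Type) [Field F] (x y z : OkI → F) :
    okMul F (okMul F x y) x = okN F x • y ∧
    okMul F x (okMul F y x) = okN F x • y ∧
    okN F (okMul F x y) = okN F x * okN F y ∧
    okB F (okMul F x y) z = okB F x (okMul F y z) := by
  refine ⟨?_, ?_, ?_, ?_⟩
  · funext k
    rcases okI_cases k with h|h|h|h|h|h|h|h <;> subst h <;>
      simp only [okMul_apply_01, okMul_apply_02, okMul_apply_10, okMul_apply_11, okMul_apply_12, okMul_apply_20, okMul_apply_21, okMul_apply_22, Pi.smul_apply, smul_eq_mul, okN] <;> ring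
  · funext k
    rcases okI_cases k with h|h|h|h|h|h|h|h <;> subst h <;>
      simp only [okMul_apply_01, okMul_apply_02, okMul_apply_10, okMul_apply_11, okMul_apply_12, okMul_apply_20, okMul_apply_21, okMul_apply_22, Pi.smul_apply, smul_eq_mul, okN] <;> ring
  · simp only [okN, okMul_apply_01, okMul_apply_02, okMul_apply_10, okMul_apply_11, okMul_apply_12, okMul_apply_20, okMul_apply_21, okMul_apply_22]
    ring
  · simp only [okB, okN, Pi.add_apply, okMul_apply_01, okMul_apply_02, okMul_apply_10, okMul_apply_11, okMul_apply_12, okMul_apply_20, okMul_apply_21, okMul_apply_22]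
    ring
end

section
/- Let F be algebraically closed of characteristic 3 and let e = Σ_{g ∈ I} e_g be the sum of all eight basis elements of the split Okubo algebra O. Then e*e = e, and the set of elements fixed by every automorphism of (O,*) is exactly the one-dimensional subspace F•e; that is, {v ∈ O | φ(v) = v for every F-linear bijection φ of O with φ(x*y) = φ(x)*φ(y) for all x,y} = F•e. -/
open scoped BigOperators

variable (R : Type) [CommRing R]

-- aux lemmas
lemma oke_apply (g : OkI) : oke R g = 1 := by
  simp [oke, okE, Finset.sum_apply, Finset.sum_pi_single]

lemma okE_apply (h k : OkI) : okE R h k = if k = h then 1 else 0 := by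
  simp [okE, Pi.single_apply]

lemma mulE (x : OkI → R) (h k g0 : OkI) (hg : (g0:OkG) + h = k) :
    okMul R x (okE R h) k = okc R g0 h * x g0 := by
  show okMulFun R x (okE R h) k = _
  unfold okMulFun
  have step1 : ∀ g : OkI,
      (∑ h' : OkI, (if (g:OkG)+(h':OkG)=(k:OkG) then okc R g h' else 0) * (x g * okE R h h'))
      = (if (g:OkG)+(h:OkG)=(k:OkG) then okc R g h else 0) * x g := by
    intro g
    rw [Finset.sum_eq_single h]
    · simp [okE_apply]
    · intro b _ hb; simp [okE_apply, hb]
    · simp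
  rw [Finset.sum_congr rfl (fun g _ => step1 g)]
  rw [Finset.sum_eq_single g0]
  · simp [hg]
  · intro b _ hb
    have hbk : (b:OkG) + h ≠ k := by
      intro hc; exact hb (Subtype.ext (add_right_cancel (hc.trans hg.symm)))
    simp [hbk]
  · simp

lemma Emul (x : OkI → R) (h k g0 : OkI) (hg : (h:OkG) + (g0:OkG) = k) :
    okMul R (okE R h) x k = okc R h g0 * x g0 := by
  show okMulFun R (okE R h) x k = _
  unfold okMulFun
  rw [Finset.sum_eq_single h]
  · rw [Finset.sum_eq_single g0]
    · simp [hg, okE_apply]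
    · intro b _ hb
      have hbk : (h:OkG) + (b:OkG) ≠ k := by
        intro hc; exact hb (Subtype.ext (add_left_cancel (hc.trans hg.symm)))
      simp [hbk]
    · simp
  · intro b _ hb; simp [okE_apply, hb]
  · simp

lemma mulE_self (x : OkI → R) (h : OkI) : okMul R x (okE R h) h = 0 := by
  show okMulFun R x (okE R h) h = _
  unfold okMulFun
  apply Finset.sum_eq_zero; intro g _
  apply Finset.sum_eq_zero; intro h' _
  rcases eq_or_ne h' h with rfl | hne
  · have : (g:OkG) + h' ≠ h' := by
      intro hc; exact g.2 (by simpa using hc)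
    simp [this]
  · simp [okE_apply, hne]

lemma Emul_self (x : OkI → R) (h : OkI) : okMul R (okE R h) x h = 0 := by
  show okMulFun R (okE R h) x h = _
  unfold okMulFun
  apply Finset.sum_eq_zero; intro g _
  apply Finset.sum_eq_zero; intro h' _
  rcases eq_or_ne g h with rfl | hne
  · have : (g:OkG) + h' ≠ g := by
      intro hc; exact h'.2 (by simpa using hc)
    simp [this]
  · simp [okE_apply, hne]

section charthree
variable (F : Type) [Field F] [CharP F 3]

noncomputable def okρ : ZMod 3 →+* F := ZMod.castHom dvd_rfl F

lemma okc_cast (g h : OkG) : okc F g h = okρ F (okc (ZMod 3) g h) := by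
  unfold okc
  rw [map_intCast]

lemma zfact1 : ∀ g h : OkI, (g:OkG)+(h:OkG) ≠ 0 →
    okc (ZMod 3) g h + okc (ZMod 3) h g = -1 := by decide

lemma zfact2 : ∀ k : OkI,
    ∑ h : OkI, (if k = h then 0 else okc (ZMod 3) ((k:OkG)-(h:OkG)) h) = 1 := by decide

lemma okc_add_swap (g h : OkI) (hgh : (g:OkG)+(h:OkG) ≠ 0) :
    okc F g h + okc F h g = -1 := by
  rw [okc_cast F, okc_cast F, ← map_add, zfact1 g h hgh, map_neg, map_one]

lemma oke_mulE_coord (h k : OkI) :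
    okMul F (oke F) (okE F h) k = if k = h then 0 else okc F ((k:OkG)-(h:OkG)) h := by
  rcases eq_or_ne k h with rfl | hne
  · simp [mulE_self]
  · have hkh : (k:OkG) - (h:OkG) ≠ 0 := sub_ne_zero.mpr (fun hc => hne (Subtype.ext hc))
    rw [mulE F (oke F) h k ⟨(k:OkG)-(h:OkG), hkh⟩ (by simp), oke_apply, mul_one]
    simp [hne]

lemma oke_idem : okMul F (oke F) (oke F) = oke F := by
  funext k
  have : okMul F (oke F) (oke F) = ∑ h : OkI, okMul F (oke F) (okE F h) := by
    rw [show oke F = ∑ h : OkI, okE F h from rfl, map_sum]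
  rw [this, Finset.sum_apply]
  rw [Finset.sum_congr rfl (fun h _ => oke_mulE_coord F h k)]
  rw [oke_apply]
  have : ∑ h : OkI, (if k = h then (0:F) else okc F ((k:OkG)-(h:OkG)) h)
      = okρ F (∑ h : OkI, (if k = h then 0 else okc (ZMod 3) ((k:OkG)-(h:OkG)) h)) := by
    rw [map_sum]
    exact Finset.sum_congr rfl fun h _ => by
      rw [apply_ite (okρ F), map_zero, okc_cast]
  rw [this, zfact2, map_one]

end charthree

section charthree2
variable (F : Type) [Field F] [CharP F 3]

lemma Emul_oke_coord (h k : OkI) :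
    okMul F (okE F h) (oke F) k = if k = h then 0 else okc F h ((k:OkG)-(h:OkG)) := by
  rcases eq_or_ne k h with rfl | hne
  · simp [Emul_self]
  · have hkh : (k:OkG) - (h:OkG) ≠ 0 := sub_ne_zero.mpr (fun hc => hne (Subtype.ext hc))
    rw [Emul F (oke F) h k ⟨(k:OkG)-(h:OkG), hkh⟩ (by ring), oke_apply, mul_one]
    simp [hne]

lemma oke_circ_E (h : OkI) :
    okMul F (oke F) (okE F h) + okMul F (okE F h) (oke F) = okE F h - oke F := by
  funext k
  rw [Pi.add_apply, Pi.sub_apply, oke_mulE_coord, Emul_oke_coord, oke_apply, okE_apply]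
  rcases eq_or_ne k h with rfl | hne
  · simp
  · have hkh : (k:OkG) - (h:OkG) ≠ 0 := sub_ne_zero.mpr (fun hc => hne (Subtype.ext hc))
    have : ((⟨(k:OkG)-(h:OkG), hkh⟩ : OkI) : OkG) + (h : OkG) ≠ 0 := by
      simp only [sub_add_cancel]; exact k.2
    have key := okc_add_swap F ⟨(k:OkG)-(h:OkG), hkh⟩ h this
    simp only [hne, if_neg]
    simpa using key

lemma pi_decomp (x : OkI → F) : x = ∑ h : OkI, x h • okE F h := by
  funext k
  rw [Finset.sum_apply]
  simp [okE_apply, mul_ite, Finset.sum_ite_eq]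

lemma oke_circ (x : OkI → F) :
    okMul F (oke F) x + okMul F x (oke F) = x + (-(∑ g : OkI, x g)) • oke F := by
  have h1 : okMul F (oke F) x = ∑ h : OkI, x h • okMul F (oke F) (okE F h) := by
    conv_lhs => rw [pi_decomp F x]
    rw [map_sum]
    exact Finset.sum_congr rfl fun h _ => by rw [map_smul]
  have h2 : okMul F x (oke F) = ∑ h : OkI, x h • okMul F (okE F h) (oke F) := by
    conv_lhs => rw [pi_decomp F x]
    rw [map_sum, LinearMap.sum_apply]
    exact Finset.sum_congr rfl fun h _ => by rw [map_smul, LinearMap.smul_apply]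
  rw [h1, h2, ← Finset.sum_add_distrib]
  have h3 : ∀ h : OkI, x h • okMul F (oke F) (okE F h) + x h • okMul F (okE F h) (oke F)
      = x h • okE F h - x h • oke F := by
    intro h
    rw [← smul_add, oke_circ_E, smul_sub]
  rw [Finset.sum_congr rfl fun h _ => h3 h, Finset.sum_sub_distrib, ← pi_decomp]
  rw [← Finset.sum_smul, neg_smul, sub_eq_add_neg]

end charthree2

section charthree3
variable (F : Type) [Field F] [CharP F 3]

lemma cube_eq_one (a : F) (ha : a ^ 3 = 1) : a = 1 := by
  have h3 : (3 : F) = 0 := by exact_mod_cast CharP.cast_eq_zero F 3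
  have hz : (a - 1) ^ 3 = 0 := by linear_combination ha + (a - a ^ 2) * h3
  have h := pow_eq_zero_iff (n := 3) (by norm_num) |>.mp hz
  linear_combination h

lemma oke_unique (f : OkI → F)
    (hf : ∀ x : OkI → F, ∃ d : F, okMul F f x + okMul F x f = x + d • f) :
    f = oke F := by
  have key : ∀ g h k : OkI, (g:OkG) + (h:OkG) = (k:OkG) → f g * f h = f k := by
    intro g h k hghk
    obtain ⟨d, hd⟩ := hf (okE F h)
    have ch := congrFun hd h
    rw [Pi.add_apply, mulE_self, Emul_self, Pi.add_apply, okE_apply, if_pos rfl,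
      Pi.smul_apply, smul_eq_mul] at ch
    have hdh : d * f h = -1 := by linear_combination -ch
    have hk : k ≠ h := by
      intro hc; subst hc; exact g.2 (by simpa using hghk)
    have ck := congrFun hd k
    rw [Pi.add_apply, mulE F f h k g hghk, Emul F f h k g (by rw [add_comm]; exact hghk),
      Pi.add_apply, okE_apply, if_neg hk, Pi.smul_apply, smul_eq_mul] at ck
    have hgh0 : (g:OkG) + (h:OkG) ≠ 0 := by rw [hghk]; exact k.2
    have swap := okc_add_swap F g h hgh0
    have h5 : -(f g) = d * f k := by linear_combination ck - f g * swap
    have h6 : f g = -(d * f k) := by linear_combination -h5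
    have h7 : f g * f h = -(d * f h) * f k := by rw [h6]; ring
    rw [hdh] at h7; simpa using h7
  have nz : ∀ h : OkI, f h ≠ 0 := by
    intro h h0
    obtain ⟨d, hd⟩ := hf (okE F h)
    have ch := congrFun hd h
    rw [Pi.add_apply, mulE_self, Emul_self, Pi.add_apply, okE_apply, if_pos rfl,
      Pi.smul_apply, smul_eq_mul, h0, mul_zero] at ch
    simp at ch
  have sq10 := key ⟨(1,0), by decide⟩ ⟨(1,0), by decide⟩ ⟨(2,0), by decide⟩ (by decide)
  have sq20 := key ⟨(2,0), by decide⟩ ⟨(2,0), by decide⟩ ⟨(1,0), by decide⟩ (by decide)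
  have sq01 := key ⟨(0,1), by decide⟩ ⟨(0,1), by decide⟩ ⟨(0,2), by decide⟩ (by decide)
  have sq02 := key ⟨(0,2), by decide⟩ ⟨(0,2), by decide⟩ ⟨(0,1), by decide⟩ (by decide)
  have h10 : f ⟨(1,0), by decide⟩ = 1 := by
    apply cube_eq_one
    refine mul_left_cancel₀ (nz ⟨(1,0), by decide⟩) ?_
    rw [mul_one]
    have h4 : f ⟨(1,0), by decide⟩ * f ⟨(1,0), by decide⟩ *
        (f ⟨(1,0), by decide⟩ * f ⟨(1,0), by decide⟩) = f ⟨(1,0), by decide⟩ := by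
      rw [sq10]; exact sq20
    linear_combination h4
  have h01 : f ⟨(0,1), by decide⟩ = 1 := by
    apply cube_eq_one
    refine mul_left_cancel₀ (nz ⟨(0,1), by decide⟩) ?_
    rw [mul_one]
    have h4 : f ⟨(0,1), by decide⟩ * f ⟨(0,1), by decide⟩ *
        (f ⟨(0,1), by decide⟩ * f ⟨(0,1), by decide⟩) = f ⟨(0,1), by decide⟩ := by
      rw [sq01]; exact sq02
    linear_combination h4
  have h20 : f ⟨(2,0), by decide⟩ = 1 := by rw [← sq10, h10, mul_one]
  have h02 : f ⟨(0,2), by decide⟩ = 1 := by rw [← sq01, h01, mul_one]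
  have h11 : f ⟨(1,1), by decide⟩ = 1 := by
    rw [← key ⟨(1,0), by decide⟩ ⟨(0,1), by decide⟩ ⟨(1,1), by decide⟩ (by decide), h10, h01,
      mul_one]
  have h21 : f ⟨(2,1), by decide⟩ = 1 := by
    rw [← key ⟨(2,0), by decide⟩ ⟨(0,1), by decide⟩ ⟨(2,1), by decide⟩ (by decide), h20, h01,
      mul_one]
  have h12 : f ⟨(1,2), by decide⟩ = 1 := by
    rw [← key ⟨(1,0), by decide⟩ ⟨(0,2), by decide⟩ ⟨(1,2), by decide⟩ (by decide), h10, h02,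
      mul_one]
  have h22 : f ⟨(2,2), by decide⟩ = 1 := by
    rw [← key ⟨(2,0), by decide⟩ ⟨(0,2), by decide⟩ ⟨(2,2), by decide⟩ (by decide), h20, h02,
      mul_one]
  funext g
  rw [oke_apply]
  obtain ⟨⟨i, j⟩, hg⟩ := g
  have hz3 : ∀ i : ZMod 3, i = 0 ∨ i = 1 ∨ i = 2 := by decide
  rcases hz3 i with rfl | rfl | rfl <;> rcases hz3 j with rfl | rfl | rfl
  · exact absurd rfl hg
  · exact h01
  · exact h02
  · exact h10
  · exact h11
  · exact h12
  · exact h20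
  · exact h21
  · exact h22

end charthree3

section perm
variable (F : Type) [Field F] [CharP F 3]

def permLE (σ : OkI ≃ OkI) : (OkI → F) ≃ₗ[F] (OkI → F) where
  toFun x := x ∘ σ
  invFun x := x ∘ σ.symm
  map_add' _ _ := rfl
  map_smul' _ _ := rfl
  left_inv x := by funext k; simp
  right_inv x := by funext k; simp

lemma permLE_apply (σ : OkI ≃ OkI) (x : OkI → F) (k : OkI) : permLE F σ x k = x (σ k) := rfl

lemma perm_mul (σ : OkI ≃ OkI)
    (h1 : ∀ g h k : OkI, ((σ g : OkG) + (σ h : OkG) = (σ k : OkG)) ↔ ((g:OkG) + (h:OkG) = (k:OkG)))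
    (h2 : ∀ g h : OkI, okc (ZMod 3) (σ g : OkG) (σ h : OkG) = okc (ZMod 3) (g:OkG) (h:OkG)) :
    ∀ x y : OkI → F, permLE F σ (okMul F x y) = okMul F (permLE F σ x) (permLE F σ y) := by
  have h2F : ∀ g h : OkI, okc F (σ g : OkG) (σ h : OkG) = okc F (g:OkG) (h:OkG) := by
    intro g h
    rw [okc_cast F, okc_cast F, h2]
  intro x y
  funext k
  show okMulFun F x y (σ k) = okMulFun F (x ∘ σ) (y ∘ σ) k
  unfold okMulFun
  symm
  refine Fintype.sum_equiv σ _ _ fun g => ?_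
  refine Fintype.sum_equiv σ _ _ fun h => ?_
  simp only [Function.comp_apply]
  rw [h2F g h, if_congr (h1 g h k) rfl rfl]

def okSigS : OkI ≃ OkI where
  toFun g := ⟨(-(g:OkG).2, (g:OkG).1), by
    intro hc
    rw [Prod.mk_eq_zero, neg_eq_zero] at hc
    exact g.2 (Prod.ext hc.2 hc.1)⟩
  invFun g := ⟨((g:OkG).2, -(g:OkG).1), by
    intro hc
    rw [Prod.mk_eq_zero, neg_eq_zero] at hc
    exact g.2 (Prod.ext hc.2 hc.1)⟩
  left_inv g := by apply Subtype.ext; simp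
  right_inv g := by apply Subtype.ext; simp

def okSigT : OkI ≃ OkI where
  toFun g := ⟨((g:OkG).1 + (g:OkG).2, (g:OkG).2), by
    intro hc
    rw [Prod.mk_eq_zero] at hc
    exact g.2 (Prod.ext (by show (g:OkG).1 = 0; rw [← hc.1, hc.2, add_zero]) hc.2)⟩
  invFun g := ⟨((g:OkG).1 - (g:OkG).2, (g:OkG).2), by
    intro hc
    rw [Prod.mk_eq_zero] at hc
    exact g.2 (Prod.ext (by show (g:OkG).1 = 0; rw [← hc.1, hc.2, sub_zero]) hc.2)⟩
  left_inv g := by apply Subtype.ext; simp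
  right_inv g := by apply Subtype.ext; simp

lemma okSigS_h1 : ∀ g h k : OkI,
    ((okSigS g : OkG) + (okSigS h : OkG) = (okSigS k : OkG)) ↔ ((g:OkG) + (h:OkG) = (k:OkG)) := by
  decide

lemma okSigS_h2 : ∀ g h : OkI,
    okc (ZMod 3) (okSigS g : OkG) (okSigS h : OkG) = okc (ZMod 3) (g:OkG) (h:OkG) := by
  decide

lemma okSigT_h1 : ∀ g h k : OkI,
    ((okSigT g : OkG) + (okSigT h : OkG) = (okSigT k : OkG)) ↔ ((g:OkG) + (h:OkG) = (k:OkG)) := by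
  decide

lemma okSigT_h2 : ∀ g h : OkI,
    okc (ZMod 3) (okSigT g : OkG) (okSigT h : OkG) = okc (ZMod 3) (g:OkG) (h:OkG) := by
  decide

end perm

/-- Over an algebraically closed field of characteristic `3`, the sum
`e` of all eight basis elements of the split Okubo algebra is an idempotent, and the set
of elements fixed by every automorphism of `(O, *)` is exactly the line `F • e`. -/
theorem okubo_fixed_elements_char_three (F : Type) [Field F] [IsAlgClosed F] [CharP F 3] :
    okMul F (oke F) (oke F) = oke F ∧
    {v : OkI → F | ∀ φ : (OkI → F) ≃ₗ[F] (OkI → F),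
        (∀ x y, φ (okMul F x y) = okMul F (φ x) (φ y)) → φ v = v} =
      {v : OkI → F | ∃ c : F, v = c • oke F} := by
  refine ⟨oke_idem F, ?_⟩
  ext v
  simp only [Set.mem_setOf_eq]
  constructor
  · intro hv
    have hS := hv (permLE F okSigS) (perm_mul F okSigS okSigS_h1 okSigS_h2)
    have hT := hv (permLE F okSigT) (perm_mul F okSigT okSigT_h1 okSigT_h2)
    have hSk : ∀ k : OkI, v (okSigS k) = v k :=
      fun k => (permLE_apply F okSigS v k).symm.trans (congrFun hS k)
    have hTk : ∀ k : OkI, v (okSigT k) = v k :=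
      fun k => (permLE_apply F okSigT v k).symm.trans (congrFun hT k)
    refine ⟨v ⟨(1,0), by decide⟩, ?_⟩
    have q01 : v ⟨(0,1), by decide⟩ = v ⟨(1,0), by decide⟩ := by
      have := hSk ⟨(1,0), by decide⟩
      rwa [show okSigS ⟨(1,0), by decide⟩ = ⟨(0,1), by decide⟩ from Subtype.ext (by decide)]
        at this
    have q20 : v ⟨(2,0), by decide⟩ = v ⟨(0,1), by decide⟩ := by
      have := hSk ⟨(0,1), by decide⟩
      rwa [show okSigS ⟨(0,1), by decide⟩ = ⟨(2,0), by decide⟩ from Subtype.ext (by decide)]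
        at this
    have q02 : v ⟨(0,2), by decide⟩ = v ⟨(2,0), by decide⟩ := by
      have := hSk ⟨(2,0), by decide⟩
      rwa [show okSigS ⟨(2,0), by decide⟩ = ⟨(0,2), by decide⟩ from Subtype.ext (by decide)]
        at this
    have q11 : v ⟨(1,1), by decide⟩ = v ⟨(0,1), by decide⟩ := by
      have := hTk ⟨(0,1), by decide⟩
      rwa [show okSigT ⟨(0,1), by decide⟩ = ⟨(1,1), by decide⟩ from Subtype.ext (by decide)]
        at this
    have q21 : v ⟨(2,1), by decide⟩ = v ⟨(1,1), by decide⟩ := by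
      have := hTk ⟨(1,1), by decide⟩
      rwa [show okSigT ⟨(1,1), by decide⟩ = ⟨(2,1), by decide⟩ from Subtype.ext (by decide)]
        at this
    have q22 : v ⟨(2,2), by decide⟩ = v ⟨(2,1), by decide⟩ := by
      have := hSk ⟨(2,1), by decide⟩
      rwa [show okSigS ⟨(2,1), by decide⟩ = ⟨(2,2), by decide⟩ from Subtype.ext (by decide)]
        at this
    have q12 : v ⟨(1,2), by decide⟩ = v ⟨(2,2), by decide⟩ := by
      have := hSk ⟨(2,2), by decide⟩
      rwa [show okSigS ⟨(2,2), by decide⟩ = ⟨(1,2), by decide⟩ from Subtype.ext (by decide)]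
        at this
    funext g
    rw [Pi.smul_apply, oke_apply, smul_eq_mul, mul_one]
    obtain ⟨⟨i, j⟩, hg⟩ := g
    have hz3 : ∀ i : ZMod 3, i = 0 ∨ i = 1 ∨ i = 2 := by decide
    rcases hz3 i with rfl | rfl | rfl <;> rcases hz3 j with rfl | rfl | rfl
    · exact absurd rfl hg
    · exact q01
    · exact q02.trans (q20.trans q01)
    · rfl
    · exact q11.trans q01
    · exact q12.trans (q22.trans (q21.trans (q11.trans q01)))
    · exact q20.trans q01
    · exact q21.trans (q11.trans q01)
    · exact q22.trans (q21.trans (q11.trans q01))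
  · rintro ⟨c, rfl⟩ φ hφ
    have hoke : φ (oke F) = oke F := by
      apply oke_unique
      intro x
      refine ⟨-(∑ g : OkI, (φ.symm x) g), ?_⟩
      have hx : x = φ (φ.symm x) := (φ.apply_symm_apply x).symm
      calc okMul F (φ (oke F)) x + okMul F x (φ (oke F))
          = okMul F (φ (oke F)) (φ (φ.symm x)) + okMul F (φ (φ.symm x)) (φ (oke F)) := by
            rw [← hx]
        _ = φ (okMul F (oke F) (φ.symm x)) + φ (okMul F (φ.symm x) (oke F)) := by
            rw [hφ, hφ]
        _ = φ (okMul F (oke F) (φ.symm x) + okMul F (φ.symm x) (oke F)) := (map_add φ _ _).symm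
        _ = φ (φ.symm x + (-(∑ g : OkI, (φ.symm x) g)) • oke F) := by rw [oke_circ]
        _ = φ (φ.symm x) + (-(∑ g : OkI, (φ.symm x) g)) • φ (oke F) := by
            rw [map_add, map_smul]
        _ = x + (-(∑ g : OkI, (φ.symm x) g)) • φ (oke F) := by rw [← hx]
    rw [map_smul, hoke]
end

section
/- Let f be a nonzero idempotent of the split Okubo algebra over a field F (f*f = f, f ≠ 0). Then n(f) = 1, and the new product x·y := (f*x)*(y*f) satisfies f·x = x = x·f for all x ∈ O and n(x·y) = n(x)·n(y) for all x, y ∈ O; that is, (O, ·, n) is a unital composition algebra with unity f. -/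
open scoped BigOperators

variable (R : Type) [CommRing R]

theorem sum_OkI {M : Type} [AddCommMonoid M] (f : OkI → M) :
  ∑ g : OkI, f g = f ⟨(1,0),by decide⟩ + f ⟨(2,0),by decide⟩ + f ⟨(0,1),by decide⟩ +
    f ⟨(0,2),by decide⟩ + f ⟨(1,1),by decide⟩ + f ⟨(2,2),by decide⟩ + f ⟨(1,2),by decide⟩ + f ⟨(2,1),by decide⟩ := by
  rw [show (Finset.univ : Finset OkI) = {⟨(1,0),by decide⟩, ⟨(2,0),by decide⟩, ⟨(0,1),by decide⟩, ⟨(0,2),by decide⟩, ⟨(1,1),by decide⟩, ⟨(2,2),by decide⟩, ⟨(1,2),by decide⟩, ⟨(2,1),by decide⟩} from by decide]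
  rw [Finset.sum_insert (by decide), Finset.sum_insert (by decide), Finset.sum_insert (by decide),
    Finset.sum_insert (by decide), Finset.sum_insert (by decide), Finset.sum_insert (by decide),
    Finset.sum_insert (by decide), Finset.sum_singleton]
  abel

theorem val_cast {R : Type} [CommRing R] (d : ZMod 3) :
    ((1 - (d.val : ℤ) : ℤ) : R) = if d = 0 then 1 else if d = 1 then 0 else -1 := by
  rcases (by decide : ∀ d : ZMod 3, d = 0 ∨ d = 1 ∨ d = 2) d with rfl | rfl | rfl <;>
    simp (config := { decide := true }) [show (2 : ZMod 3).val = 2 from rfl, show (1 : ZMod 3).val = 1 from rfl]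

theorem okc_val {R : Type} [CommRing R] (g h : OkG) :
    okc R g h = if g.1*h.2 - g.2*h.1 = 0 then 1 else if g.1*h.2 - g.2*h.1 = 1 then 0 else -1 := by
  rw [okc, val_cast]

theorem okMul_c10 (R : Type) [CommRing R] (x y : OkI → R) :
    okMul R x y ⟨(1,0),by decide⟩ = x ⟨(2,0),by decide⟩ * y ⟨(2,0),by decide⟩ - x ⟨(0,1),by decide⟩ * y ⟨(1,2),by decide⟩ - x ⟨(1,1),by decide⟩ * y ⟨(0,2),by decide⟩ - x ⟨(2,1),by decide⟩ * y ⟨(2,2),by decide⟩ := by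
  show okMulFun R x y _ = _
  rw [okMulFun, sum_OkI]
  simp (config := { decide := true }) only [sum_OkI, okc_val, ite_true, ite_false]
  ring
theorem okMul_c20 (R : Type) [CommRing R] (x y : OkI → R) :
    okMul R x y ⟨(2,0),by decide⟩ = x ⟨(1,0),by decide⟩ * y ⟨(1,0),by decide⟩ - x ⟨(0,2),by decide⟩ * y ⟨(2,1),by decide⟩ - x ⟨(2,2),by decide⟩ * y ⟨(0,1),by decide⟩ - x ⟨(1,2),by decide⟩ * y ⟨(1,1),by decide⟩ := by
  show okMulFun R x y _ = _
  rw [okMulFun, sum_OkI]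
  simp (config := { decide := true }) only [sum_OkI, okc_val, ite_true, ite_false]
  ring
theorem okMul_c01 (R : Type) [CommRing R] (x y : OkI → R) :
    okMul R x y ⟨(0,1),by decide⟩ = - x ⟨(2,0),by decide⟩ * y ⟨(1,1),by decide⟩ + x ⟨(0,2),by decide⟩ * y ⟨(0,2),by decide⟩ - x ⟨(2,2),by decide⟩ * y ⟨(1,2),by decide⟩ - x ⟨(2,1),by decide⟩ * y ⟨(1,0),by decide⟩ := by
  show okMulFun R x y _ = _
  rw [okMulFun, sum_OkI]
  simp (config := { decide := true }) only [sum_OkI, okc_val, ite_true, ite_false]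
  ring
theorem okMul_c02 (R : Type) [CommRing R] (x y : OkI → R) :
    okMul R x y ⟨(0,2),by decide⟩ = - x ⟨(1,0),by decide⟩ * y ⟨(2,2),by decide⟩ + x ⟨(0,1),by decide⟩ * y ⟨(0,1),by decide⟩ - x ⟨(1,1),by decide⟩ * y ⟨(2,1),by decide⟩ - x ⟨(1,2),by decide⟩ * y ⟨(2,0),by decide⟩ := by
  show okMulFun R x y _ = _
  rw [okMulFun, sum_OkI]
  simp (config := { decide := true }) only [sum_OkI, okc_val, ite_true, ite_false]
  ring
theorem okMul_c11 (R : Type) [CommRing R] (x y : OkI → R) :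
    okMul R x y ⟨(1,1),by decide⟩ = - x ⟨(2,0),by decide⟩ * y ⟨(2,1),by decide⟩ - x ⟨(0,1),by decide⟩ * y ⟨(1,0),by decide⟩ + x ⟨(2,2),by decide⟩ * y ⟨(2,2),by decide⟩ - x ⟨(1,2),by decide⟩ * y ⟨(0,2),by decide⟩ := by
  show okMulFun R x y _ = _
  rw [okMulFun, sum_OkI]
  simp (config := { decide := true }) only [sum_OkI, okc_val, ite_true, ite_false]
  ring
theorem okMul_c22 (R : Type) [CommRing R] (x y : OkI → R) :
    okMul R x y ⟨(2,2),by decide⟩ = - x ⟨(1,0),by decide⟩ * y ⟨(1,2),by decide⟩ - x ⟨(0,2),by decide⟩ * y ⟨(2,0),by decide⟩ + x ⟨(1,1),by decide⟩ * y ⟨(1,1),by decide⟩ - x ⟨(2,1),by decide⟩ * y ⟨(0,1),by decide⟩ := by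
  show okMulFun R x y _ = _
  rw [okMulFun, sum_OkI]
  simp (config := { decide := true }) only [sum_OkI, okc_val, ite_true, ite_false]
  ring
theorem okMul_c12 (R : Type) [CommRing R] (x y : OkI → R) :
    okMul R x y ⟨(1,2),by decide⟩ = - x ⟨(1,0),by decide⟩ * y ⟨(0,2),by decide⟩ - x ⟨(0,1),by decide⟩ * y ⟨(1,1),by decide⟩ - x ⟨(2,2),by decide⟩ * y ⟨(2,0),by decide⟩ + x ⟨(2,1),by decide⟩ * y ⟨(2,1),by decide⟩ := by
  show okMulFun R x y _ = _
  rw [okMulFun, sum_OkI]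
  simp (config := { decide := true }) only [sum_OkI, okc_val, ite_true, ite_false]
  ring
theorem okMul_c21 (R : Type) [CommRing R] (x y : OkI → R) :
    okMul R x y ⟨(2,1),by decide⟩ = - x ⟨(2,0),by decide⟩ * y ⟨(0,1),by decide⟩ - x ⟨(0,2),by decide⟩ * y ⟨(2,2),by decide⟩ - x ⟨(1,1),by decide⟩ * y ⟨(1,0),by decide⟩ + x ⟨(1,2),by decide⟩ * y ⟨(1,2),by decide⟩ := by
  show okMulFun R x y _ = _
  rw [okMulFun, sum_OkI]
  simp (config := { decide := true }) only [sum_OkI, okc_val, ite_true, ite_false]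
  ring

theorem OkI_ext {R : Type} [CommRing R] {u v : OkI → R}
    (h1 : u ⟨(1,0),by decide⟩ = v ⟨(1,0),by decide⟩)
    (h2 : u ⟨(2,0),by decide⟩ = v ⟨(2,0),by decide⟩)
    (h3 : u ⟨(0,1),by decide⟩ = v ⟨(0,1),by decide⟩)
    (h4 : u ⟨(0,2),by decide⟩ = v ⟨(0,2),by decide⟩)
    (h5 : u ⟨(1,1),by decide⟩ = v ⟨(1,1),by decide⟩)
    (h6 : u ⟨(2,2),by decide⟩ = v ⟨(2,2),by decide⟩)
    (h7 : u ⟨(1,2),by decide⟩ = v ⟨(1,2),by decide⟩)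
    (h8 : u ⟨(2,1),by decide⟩ = v ⟨(2,1),by decide⟩) : u = v := by
  funext k
  rcases k with ⟨⟨a,b⟩,hk⟩
  fin_cases a <;> fin_cases b <;>
    first
      | exact absurd rfl hk
      | exact h1 | exact h2 | exact h3 | exact h4
      | exact h5 | exact h6 | exact h7 | exact h8

theorem okN_mul (R : Type) [CommRing R] (x y : OkI → R) :
    okN R (okMul R x y) = okN R x * okN R y := by
  simp only [okN, okMul_c10, okMul_c20, okMul_c01, okMul_c02, okMul_c11, okMul_c22, okMul_c12, okMul_c21]
  ring

theorem okMul_left (R : Type) [CommRing R] (x y : OkI → R) :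
    okMul R x (okMul R y x) = okN R x • y := by
  refine OkI_ext ?_ ?_ ?_ ?_ ?_ ?_ ?_ ?_ <;>
    · simp only [okN, okMul_c10, okMul_c20, okMul_c01, okMul_c02, okMul_c11, okMul_c22, okMul_c12, okMul_c21, Pi.smul_apply, smul_eq_mul]
      ring

theorem okMul_right (R : Type) [CommRing R] (x y : OkI → R) :
    okMul R (okMul R x y) x = okN R x • y := by
  refine OkI_ext ?_ ?_ ?_ ?_ ?_ ?_ ?_ ?_ <;>
    · simp only [okN, okMul_c10, okMul_c20, okMul_c01, okMul_c02, okMul_c11, okMul_c22, okMul_c12, okMul_c21, Pi.smul_apply, smul_eq_mul]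
      ring

/-- If `f` is a nonzero idempotent of the split Okubo algebra over a
field `F`, then `n(f) = 1` and the product `x · y = (f*x)*(y*f)` is unital with unity `f`
and multiplicative with respect to the norm: `(O, ·, n)` is a unital composition algebra. -/
theorem okubo_idempotent_unital_composition (F : Type) [Field F]
    (f : OkI → F) (hf : okMul F f f = f) (hf0 : f ≠ 0)
    (cdot : (OkI → F) → (OkI → F) → (OkI → F))
    (hcdot : ∀ x y, cdot x y = okMul F (okMul F f x) (okMul F y f)) :
    okN F f = 1 ∧
    (∀ x, cdot f x = x) ∧
    (∀ x, cdot x f = x) ∧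
    (∀ x y, okN F (cdot x y) = okN F x * okN F y) := by
  have hn1 : okN F f = 1 := by
    have h2 := okMul_left F f f
    rw [hf, hf] at h2
    obtain ⟨k, hk⟩ := Function.ne_iff.1 hf0
    have hk' : f k ≠ 0 := by simpa using hk
    have := congrFun h2 k
    simp only [Pi.smul_apply, smul_eq_mul] at this
    have : okN F f * f k = 1 * f k := by rw [one_mul]; exact this.symm
    exact mul_right_cancel₀ hk' this
  refine ⟨hn1, ?_, ?_, ?_⟩
  · intro x
    rw [hcdot, hf, okMul_left, hn1, one_smul]
  · intro x
    rw [hcdot, hf, okMul_right, hn1, one_smul]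
  · intro x y
    rw [hcdot, okN_mul, okN_mul, okN_mul, hn1, one_mul, mul_one]
end
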